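/- If λ has trivial p-core, then ∑_{x∈λ} (⌈c_λ(x)/p⌉ − ⌊c_λ(x)/p⌋) = (p−1)·|λ|/p. -/

import Mathlib

open Set

namespace MM

/-- `f : ℕ → ℕ` encodes a partition (0-indexed rows) if it is antitone and eventually zero. -/
def IsPartition (f : ℕ → ℕ) : Prop :=
  Antitone f ∧ ∃ N, ∀ i, N ≤ i → f i = 0

/-- boxes of the Young diagram (0-indexed) -/
def cells (f : ℕ → ℕ) : Set (ℕ × ℕ) := {c | c.2 < f c.1}

noncomputable def size (f : ℕ → ℕ) : ℕ := (cells f).ncard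

noncomputable def transpose (f : ℕ → ℕ) : ℕ → ℕ := fun j => {i | j < f i}.ncard

/-- hook length of a box -/
noncomputable def hook (f : ℕ → ℕ) (c : ℕ × ℕ) : ℤ :=
  (f c.1 : ℤ) + transpose f c.2 - c.1 - c.2 - 1

/-- content of a box -/
def content (c : ℕ × ℕ) : ℤ := (c.2 : ℤ) - c.1

/-- Maya (beta) set of a partition: beads at positions `f i - i - 1`. -/
def maya (f : ℕ → ℕ) : Set ℤ := {z | ∃ i : ℕ, z = (f i : ℤ) - i - 1}

/-- the `i`-th largest element ("bead" of rank `i`) of a set of integers -/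
noncomputable def bead (S : Set ℤ) (i : ℕ) : ℤ :=
  sSup {z | z ∈ S ∧ {w | w ∈ S ∧ z < w}.ncard = i}

/-- the partition encoded by a Maya set: row `i` counts holes below bead `i`. -/
noncomputable def partOf (S : Set ℤ) : ℕ → ℕ :=
  fun i => {t | t ∉ S ∧ t < bead S i}.ncard

/-- column-`μ` bead set: bead `z` lies in column `(-z-1) mod p`. -/
def col (S : Set ℤ) (p μ : ℕ) : Set ℤ := {k | (p : ℤ) * k - μ - 1 ∈ S}

noncomputable def charge (S : Set ℤ) : ℤ :=
  ({z | z ∈ S ∧ 0 ≤ z}.ncard : ℤ) - ({z | z ∉ S ∧ z < 0}.ncard : ℤ)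

/-- the `μ`-th component of the `p`-quotient of the partition `f` -/
noncomputable def pquot (f : ℕ → ℕ) (p μ : ℕ) : ℕ → ℕ :=
  partOf (col (maya f) p μ)

/-- the Maya set of the `p`-core: slide all beads down in each column. -/
noncomputable def coreMaya (f : ℕ → ℕ) (p : ℕ) : Set ℤ :=
  {z | ∃ μ : ℕ, μ < p ∧ ∃ k : ℤ, k < charge (col (maya f) p μ) ∧ z = (p:ℤ) * k - μ - 1}

/-- the `p`-core of `f` -/
noncomputable def pcore (f : ℕ → ℕ) (p : ℕ) : ℕ → ℕ := partOf (coreMaya f p)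

/-- the rearrangement map `σ̂`: overall bead rank ↦ `p * (rank within its column) + column`. -/
noncomputable def sigmaHat (f : ℕ → ℕ) (p : ℕ) : ℕ → ℕ :=
  fun I =>
    p * ({w | w ∈ maya f ∧ bead (maya f) I < w ∧ (p:ℤ) ∣ (w - bead (maya f) I)}.ncard)
      + ((-(bead (maya f) I) - 1) % (p:ℤ)).toNat

/-- the `p`-signature of `f`: the sign of `σ̂` if finitary, else `0`,
computed as the parity of the (finite) number of inversions. -/
noncomputable def psign (f : ℕ → ℕ) (p : ℕ) : ℤ :=
  letI := Classical.propDecidable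
  if {q : ℕ × ℕ | q.1 < q.2 ∧ sigmaHat f p q.2 < sigmaHat f p q.1}.Finite then
    (-1) ^ ({q : ℕ × ℕ | q.1 < q.2 ∧ sigmaHat f p q.2 < sigmaHat f p q.1}.ncard)
  else 0

end MM

namespace MMAux
open MM

lemma ediv_emod_unique' {p z k r : ℤ} (hp : 0 < p) (h : z = p * k + r) (h0 : 0 ≤ r) (h1 : r < p) :
    z / p = k ∧ z % p = r :=
  (Int.ediv_emod_unique hp).2 ⟨by linarith, h0, h1⟩

lemma neg_ediv {p : ℤ} (hp : 0 < p) (c : ℤ) : (-c) / p = -((c - 1) / p) - 1 := by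
  have e := Int.mul_ediv_add_emod (c - 1) p
  have h0 := Int.emod_nonneg (c - 1) (by omega : p ≠ 0)
  have h1 := Int.emod_lt_of_pos (c - 1) hp
  exact (ediv_emod_unique' (r := p - 1 - (c - 1) % p) hp (by linarith) (by linarith) (by linarith)).1

lemma ediv_sub_one {p : ℤ} (hp : 0 < p) (z : ℤ) :
    z / p - (z - 1) / p = if p ∣ z then 1 else 0 := by
  have e := Int.mul_ediv_add_emod z p
  have h0 := Int.emod_nonneg z (by omega : p ≠ 0)
  have h1 := Int.emod_lt_of_pos z hp
  by_cases hd : p ∣ z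
  · have hm : z % p = 0 := Int.emod_eq_zero_of_dvd hd
    have : (z - 1) / p = z / p - 1 :=
      (ediv_emod_unique' (r := p - 1) hp (by linarith) (by linarith) (by linarith)).1
    simp [hd, this]
  · have hm : z % p ≠ 0 := fun h => hd (Int.dvd_of_emod_eq_zero h)
    have : (z - 1) / p = z / p :=
      (ediv_emod_unique' (r := z % p - 1) hp (by linarith) (by omega) (by omega)).1
    simp [hd, this]

lemma G_eq {p : ℤ} (hp : 0 < p) (c : ℤ) :
    (-((-c).fdiv p)) - c.fdiv p = 1 - (c / p - (c - 1) / p) := by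
  rw [Int.fdiv_eq_ediv_of_nonneg _ hp.le, Int.fdiv_eq_ediv_of_nonneg _ hp.le, neg_ediv hp]
  ring

lemma row_sum {p : ℤ} (hp : 0 < p) (i m : ℕ) :
    ∑ j ∈ Finset.range m, ((-((-((j : ℤ) - i)).fdiv p)) - ((j : ℤ) - i).fdiv p)
      = m - (((m : ℤ) - 1 - i) / p - (-1 - (i : ℤ)) / p) := by
  induction m with
  | zero => simp
  | succ m ih =>
    rw [Finset.sum_range_succ, ih, G_eq hp]
    push_cast
    ring_nf

lemma ncard_Ico (a b : ℤ) : (Set.Ico a b).ncard = (b - a).toNat := by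
  rw [Set.ncard_eq_toFinset_card']
  simp [Set.toFinset_Ico]

lemma charge_count {C : Set ℤ} {t : ℤ} (ht : t ≤ 0)
    (hlow : ∀ k < t, k ∈ C)
    (hfin1 : {z | z ∈ C ∧ 0 ≤ z}.Finite)
    (hfin2 : {z | z ∉ C ∧ z < 0}.Finite) :
    ({k | k ∈ C ∧ t ≤ k}.ncard : ℤ) = charge C - t := by
  have hsub : {z | z ∉ C ∧ z < 0} ⊆ Set.Ico t 0 := by
    rintro z ⟨hz1, hz2⟩
    exact ⟨by by_contra h; exact hz1 (hlow z (by omega)), hz2⟩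
  have hB : {k | k ∈ C ∧ t ≤ k ∧ k < 0} = Set.Ico t 0 \ {z | z ∉ C ∧ z < 0} := by
    ext z; simp only [Set.mem_setOf_eq, Set.mem_diff, Set.mem_Ico]
    constructor
    · rintro ⟨h1, h2, h3⟩; exact ⟨⟨h2, h3⟩, fun h => h.1 h1⟩
    · rintro ⟨⟨h2, h3⟩, h⟩
      refine ⟨?_, h2, h3⟩
      by_contra hc; exact h ⟨hc, h3⟩
  have hIcofin : (Set.Ico t 0).Finite := Set.finite_Ico t 0
  have hBfin : {k | k ∈ C ∧ t ≤ k ∧ k < 0}.Finite := by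
    rw [hB]; exact hIcofin.diff
  have hle : {z | z ∉ C ∧ z < 0}.ncard ≤ (Set.Ico t 0).ncard :=
    Set.ncard_le_ncard hsub hIcofin
  have hBcard : {k | k ∈ C ∧ t ≤ k ∧ k < 0}.ncard
      = (Set.Ico t 0).ncard - {z | z ∉ C ∧ z < 0}.ncard := by
    rw [hB]; exact Set.ncard_diff hsub hfin2
  have hunion : {k | k ∈ C ∧ t ≤ k}
      = {z | z ∈ C ∧ 0 ≤ z} ∪ {k | k ∈ C ∧ t ≤ k ∧ k < 0} := by
    ext z; simp only [Set.mem_setOf_eq, Set.mem_union]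
    constructor
    · rintro ⟨h1, h2⟩
      rcases le_or_gt 0 z with h | h
      · exact Or.inl ⟨h1, h⟩
      · exact Or.inr ⟨h1, h2, h⟩
    · rintro (⟨h1, h2⟩ | ⟨h1, h2, h3⟩)
      · exact ⟨h1, by omega⟩
      · exact ⟨h1, h2⟩
  have hdisj : Disjoint {z | z ∈ C ∧ 0 ≤ z} {k | k ∈ C ∧ t ≤ k ∧ k < 0} := by
    rw [Set.disjoint_left]
    rintro z ⟨_, h1⟩ ⟨_, _, h2⟩; omega
  have hcard : {k | k ∈ C ∧ t ≤ k}.ncard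
      = {z | z ∈ C ∧ 0 ≤ z}.ncard + {k | k ∈ C ∧ t ≤ k ∧ k < 0}.ncard := by
    rw [hunion]; exact Set.ncard_union_eq hdisj hfin1 hBfin
  have hIco := ncard_Ico t 0
  unfold charge
  omega

/-- beta numbers -/
def beta (g : ℕ → ℕ) (i : ℕ) : ℤ := (g i : ℤ) - i - 1

section Partition

variable {g : ℕ → ℕ} {N p : ℕ}

lemma beta_strictAnti (hg : Antitone g) : StrictAnti (beta g) :=
  strictAnti_nat_of_succ_lt fun n => by
    have h := hg (by omega : n ≤ n + 1)
    unfold beta; push_cast; omega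

lemma maya_eq (z : ℤ) : z ∈ maya g ↔ ∃ i, beta g i = z := by
  simp [maya, beta, eq_comm]

lemma mem_maya_of_le (hN : ∀ i, N ≤ i → g i = 0) {z : ℤ} (hz : z ≤ -(N : ℤ) - 1) :
    z ∈ maya g := by
  refine (maya_eq z).2 ⟨(-z - 1).toNat, ?_⟩
  have h1 : ((-z - 1).toNat : ℤ) = -z - 1 := Int.toNat_of_nonneg (by omega)
  have h2 : N ≤ (-z - 1).toNat := by omega
  rw [beta, hN _ h2]
  push_cast
  omega

lemma maya_le_beta0 (hg : Antitone g) {z : ℤ} (hz : z ∈ maya g) : z ≤ beta g 0 := by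
  obtain ⟨i, hi⟩ := (maya_eq z).1 hz
  rw [← hi]
  exact (beta_strictAnti hg).antitone (Nat.zero_le i)

lemma mem_maya_ge_iff (hg : Antitone g) (hN : ∀ i, N ≤ i → g i = 0) {z : ℤ} :
    (z ∈ maya g ∧ -(N : ℤ) ≤ z) ↔ ∃ i, i < N ∧ beta g i = z := by
  constructor
  · rintro ⟨hz, hzN⟩
    obtain ⟨i, hi⟩ := (maya_eq z).1 hz
    refine ⟨i, ?_, hi⟩
    by_contra h
    have h0 : g i = 0 := hN i (by omega)
    rw [beta, h0] at hi
    push_cast at hi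
    omega
  · rintro ⟨i, hiN, hi⟩
    have h0 : (0 : ℤ) ≤ (g i : ℤ) := by positivity
    refine ⟨(maya_eq z).2 ⟨i, hi⟩, ?_⟩
    rw [← hi, beta]
    push_cast
    omega

lemma thr (hp : 0 < p) (r : ℕ) (k : ℤ) :
    -(((N : ℤ) - r - 1) / p) ≤ k ↔ -(N : ℤ) ≤ (p : ℤ) * k - r - 1 := by
  have hp' : (0 : ℤ) < p := by exact_mod_cast hp
  have h := Int.le_ediv_iff_mul_le (a := -k) (b := (N : ℤ) - r - 1) hp'
  constructor
  · intro hk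
    have h2 : -k ≤ ((N : ℤ) - r - 1) / p := by linarith
    have h3 := h.1 h2
    nlinarith [h3]
  · intro hk
    have h3 : -k * (p : ℤ) ≤ (N : ℤ) - r - 1 := by nlinarith
    have h4 := h.2 h3
    linarith

lemma col_pos_finite (hg : Antitone g) (hp : 0 < p) (r : ℕ) :
    {z | z ∈ col (maya g) p r ∧ 0 ≤ z}.Finite := by
  apply (Set.finite_Icc 0 (beta g 0 + r + 1)).subset
  rintro k ⟨hk, hk0⟩
  have hp' : (1 : ℤ) ≤ p := by exact_mod_cast hp
  have hk' : (p : ℤ) * k - r - 1 ∈ maya g := hk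
  have h1 : (p : ℤ) * k - r - 1 ≤ beta g 0 := maya_le_beta0 hg hk'
  have h2 : k ≤ (p : ℤ) * k := le_mul_of_one_le_left hk0 hp'
  exact ⟨hk0, by linarith⟩

lemma col_neg_finite (hN : ∀ i, N ≤ i → g i = 0) (hp : 0 < p) (r : ℕ) :
    {k | k ∉ col (maya g) p r ∧ k < 0}.Finite := by
  apply (Set.finite_Icc (-(N : ℤ)) 0).subset
  rintro k ⟨hk, hk0⟩
  have hp' : (1 : ℤ) ≤ p := by exact_mod_cast hp
  have hr0 : (0 : ℤ) ≤ (r : ℤ) := by positivity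
  have hN0 : (0 : ℤ) ≤ (N : ℤ) := by positivity
  have h1 : ¬ ((p : ℤ) * k - r - 1 ≤ -(N : ℤ) - 1) := fun h => hk (mem_maya_of_le hN h)
  push_neg at h1
  have h2 : (p : ℤ) * k ≤ k := by nlinarith
  exact ⟨by linarith, by linarith⟩

lemma fiber_card (hg : Antitone g) (hN : ∀ i, N ≤ i → g i = 0) (hp : 0 < p)
    (hpN : p ≤ N) (r : ℕ) (hr : r < p) :
    (((Finset.range N).filter (fun i => (-(beta g i) - 1) % (p : ℤ) = r)).card : ℤ)
      = charge (col (maya g) p r) + ((N : ℤ) - r - 1) / p := by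
  classical
  have hp' : (0 : ℤ) < p := by exact_mod_cast hp
  set t : ℤ := -(((N : ℤ) - r - 1) / p) with htdef
  set F := (Finset.range N).filter (fun i => (-(beta g i) - 1) % (p : ℤ) = r) with hF
  set Φ : ℕ → ℤ := fun i => -((-(beta g i) - 1) / p) with hΦ
  have key : ∀ i ∈ F, (p : ℤ) * Φ i - r - 1 = beta g i := by
    intro i hi
    rw [hF, Finset.mem_filter] at hi
    have e := Int.mul_ediv_add_emod (-(beta g i) - 1) p
    rw [hi.2] at e
    simp only [hΦ]
    linarith
  have hbetaN : ∀ i, i < N → -(N : ℤ) ≤ beta g i := by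
    intro i hi
    have h0 : (0 : ℤ) ≤ (g i : ℤ) := by positivity
    rw [beta]; push_cast; omega
  have hseteq : {k | k ∈ col (maya g) p r ∧ t ≤ k} = Φ '' ↑F := by
    ext k
    simp only [Set.mem_setOf_eq, Set.mem_image, Finset.mem_coe]
    constructor
    · rintro ⟨hk, htk⟩
      have hz : ((p : ℤ) * k - r - 1) ∈ maya g := hk
      have hzN : -(N : ℤ) ≤ (p : ℤ) * k - r - 1 := (thr hp r k).1 htk
      obtain ⟨i, hiN, hib⟩ := (mem_maya_ge_iff hg hN).1 ⟨hz, hzN⟩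
      have hrep : -(beta g i) - 1 = (p : ℤ) * (-k) + r := by rw [hib]; ring
      have hdm := ediv_emod_unique' hp' hrep (by positivity) (by exact_mod_cast hr)
      refine ⟨i, ?_, ?_⟩
      · rw [hF, Finset.mem_filter]; exact ⟨Finset.mem_range.2 hiN, hdm.2⟩
      · simp only [hΦ]; rw [hdm.1]; ring
    · rintro ⟨i, hiF, hik⟩
      have hk := key i hiF
      rw [hik] at hk
      have hiN : i < N := Finset.mem_range.1 (Finset.mem_filter.1 (hF ▸ hiF)).1
      constructor
      · show ((p : ℤ) * k - r - 1) ∈ maya g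
        rw [hk]; exact (maya_eq _).2 ⟨i, rfl⟩
      · exact (thr hp r k).2 (by rw [hk]; exact hbetaN i hiN)
  have hinj : Set.InjOn Φ ↑F := by
    intro i hi j hj hij
    have h1 := key i hi
    have h2 := key j hj
    have h3 : beta g i = beta g j := by rw [← h1, ← h2, hij]
    exact (beta_strictAnti hg).injective h3
  have ht0 : t ≤ 0 := by
    have h5 : (0 : ℤ) ≤ ((N : ℤ) - r - 1) / p :=
      Int.ediv_nonneg (by push_cast; omega) hp'.le
    omega
  have hlow : ∀ k, k < t → k ∈ col (maya g) p r := by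
    intro k hk
    show ((p : ℤ) * k - r - 1) ∈ maya g
    have h2 : ¬ (-(N : ℤ) ≤ (p : ℤ) * k - r - 1) := by
      intro h
      have := (thr hp r k).2 h
      omega
    push_neg at h2
    have h3 := Int.lt_iff_add_one_le.1 h2
    exact mem_maya_of_le hN (by linarith)
  have hcc := charge_count ht0 hlow (col_pos_finite hg hp r) (col_neg_finite hN hp r)
  rw [hseteq, Set.ncard_image_of_injOn hinj, Set.ncard_coe_finset] at hcc
  rw [hcc]
  omega

lemma sum_fibers (hp : 0 < p) :
    N = ∑ r ∈ Finset.range p,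
      ((Finset.range N).filter (fun i => (-(beta g i) - 1) % (p : ℤ) = r)).card := by
  classical
  have hp' : (0 : ℤ) < p := by exact_mod_cast hp
  have hmaps : ∀ i ∈ Finset.range N, ((-(beta g i) - 1) % (p : ℤ)).toNat ∈ Finset.range p := by
    intro i _
    have h0 := Int.emod_nonneg (-(beta g i) - 1) (by omega : (p : ℤ) ≠ 0)
    have h1 := Int.emod_lt_of_pos (-(beta g i) - 1) hp'
    rw [Finset.mem_range]
    omega
  have h := Finset.card_eq_sum_card_fiberwise hmaps
  rw [Finset.card_range] at h
  have hfeq : ∀ r ∈ Finset.range p,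
      ((Finset.range N).filter (fun i => ((-(beta g i) - 1) % (p : ℤ)).toNat = r)).card
        = ((Finset.range N).filter (fun i => (-(beta g i) - 1) % (p : ℤ) = r)).card := by
    intro r hr
    rw [Finset.mem_range] at hr
    congr 1
    apply Finset.filter_congr
    intro i _
    have h0 := Int.emod_nonneg (-(beta g i) - 1) (by omega : (p : ℤ) ≠ 0)
    constructor
    · intro h'; omega
    · intro h'; omega
  rw [← Finset.sum_congr rfl hfeq]
  exact h

lemma sum_mod (hp : 0 < p) :
    ∑ i ∈ Finset.range N, (-(beta g i) - 1) % (p : ℤ)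
      = ∑ r ∈ Finset.range p, (r : ℤ) *
        ((Finset.range N).filter (fun i => (-(beta g i) - 1) % (p : ℤ) = r)).card := by
  classical
  have hp' : (0 : ℤ) < p := by exact_mod_cast hp
  have hmaps : ∀ i ∈ Finset.range N, ((-(beta g i) - 1) % (p : ℤ)).toNat ∈ Finset.range p := by
    intro i _
    have h0 := Int.emod_nonneg (-(beta g i) - 1) (by omega : (p : ℤ) ≠ 0)
    have h1 := Int.emod_lt_of_pos (-(beta g i) - 1) hp'
    rw [Finset.mem_range]
    omega
  rw [← Finset.sum_fiberwise_of_maps_to hmaps (fun i => (-(beta g i) - 1) % (p : ℤ))]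
  apply Finset.sum_congr rfl
  intro r hr
  rw [Finset.mem_range] at hr
  have hfeq : (Finset.range N).filter (fun i => ((-(beta g i) - 1) % (p : ℤ)).toNat = r)
      = (Finset.range N).filter (fun i => (-(beta g i) - 1) % (p : ℤ) = r) := by
    apply Finset.filter_congr
    intro i _
    have h0 := Int.emod_nonneg (-(beta g i) - 1) (by omega : (p : ℤ) ≠ 0)
    constructor
    · intro h'; omega
    · intro h'; omega
  rw [hfeq]
  rw [Finset.sum_congr rfl (fun i hi => (Finset.mem_filter.1 hi).2)]
  rw [Finset.sum_const, nsmul_eq_mul, mul_comm]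

end Partition

lemma maya_zero : maya (fun _ => 0) = Set.Iio (0 : ℤ) := by
  ext z
  simp only [maya, Set.mem_setOf_eq, Set.mem_Iio]
  constructor
  · rintro ⟨i, rfl⟩; push_cast; omega
  · intro hz
    refine ⟨(-z - 1).toNat, ?_⟩
    have h1 : ((-z - 1).toNat : ℤ) = -z - 1 := Int.toNat_of_nonneg (by omega)
    push_cast
    omega

lemma col_zero {p : ℕ} (hp : 0 < p) (r : ℕ) (hr : r < p) :
    col (Set.Iio (0 : ℤ)) p r = Set.Iic (0 : ℤ) := by
  ext k
  simp only [col, Set.mem_setOf_eq, Set.mem_Iio, Set.mem_Iic]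
  have hp' : (0 : ℤ) < p := by exact_mod_cast hp
  have hrp : (r : ℤ) < p := by exact_mod_cast hr
  have hr0 : (0 : ℤ) ≤ r := by positivity
  constructor
  · intro h
    by_contra hk
    push_neg at hk
    have h2 : (1 : ℤ) ≤ k := hk
    have h3 : (p : ℤ) * 1 ≤ p * k := mul_le_mul_of_nonneg_left h2 hp'.le
    linarith
  · intro hk
    have h3 : (p : ℤ) * k ≤ 0 := mul_nonpos_of_nonneg_of_nonpos hp'.le hk
    linarith

lemma charge_Iic : charge (Set.Iic (0 : ℤ)) = 1 := by
  have h1 : {z | z ∈ Set.Iic (0 : ℤ) ∧ 0 ≤ z} = {0} := by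
    ext z; simp only [Set.mem_setOf_eq, Set.mem_Iic, Set.mem_singleton_iff]; omega
  have h2 : {z | z ∉ Set.Iic (0 : ℤ) ∧ z < 0} = ∅ := by
    ext z; simp only [Set.mem_setOf_eq, Set.mem_Iic, Set.mem_empty_iff_false, iff_false]
    omega
  unfold charge
  rw [h1, h2]
  simp

lemma repr_unique {p : ℤ} (hp : 0 < p) {μ μ' k k' : ℤ} (hμ : 0 ≤ μ) (hμp : μ < p)
    (hμ' : 0 ≤ μ') (hμp' : μ' < p) (h : p * k - μ - 1 = p * k' - μ' - 1) :
    μ = μ' ∧ k = k' := by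
  have h3 : p * (k - k') = μ - μ' := by linear_combination h
  rcases lt_trichotomy k k' with hlt | heq | hgt
  · exfalso
    have h4 : k - k' ≤ -1 := by omega
    have h5 : p * (k - k') ≤ p * (-1) := mul_le_mul_of_nonneg_left h4 hp.le
    linarith
  · constructor
    · rw [heq] at h3; simp at h3; linarith
    · exact heq
  · exfalso
    have h4 : (1 : ℤ) ≤ k - k' := by omega
    have h5 : p * 1 ≤ p * (k - k') := mul_le_mul_of_nonneg_left h4 hp.le
    linarith

lemma core_nontrivial {f : ℕ → ℕ} {p : ℕ} (hp : 0 < p) {μ ν : ℕ} (hμ : μ < p) (hν : ν < p)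
    (hcμ : charge (col (maya f) p μ) ≤ 0) (hcν : 2 ≤ charge (col (maya f) p ν)) :
    ∃ i, MM.pcore f p i ≠ 0 := by
  classical
  have hp' : (0 : ℤ) < p := by exact_mod_cast hp
  set Cr : ℕ → ℤ := fun r => charge (col (maya f) p r) with hCr
  have hcμ2 : Cr μ ≤ 0 := hcμ
  have hcν2 : 2 ≤ Cr ν := hcν
  set S : Set ℤ := coreMaya f p with hS
  set M : ℤ := (∑ r ∈ Finset.range p, |Cr r|) + 1 with hM
  have habs : ∀ r, r < p → |Cr r| ≤ M - 1 := by
    intro r hr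
    have h1 : |Cr r| ≤ ∑ j ∈ Finset.range p, |Cr j| :=
      Finset.single_le_sum (f := fun j => |Cr j|) (fun i _ => abs_nonneg _)
        (Finset.mem_range.2 hr)
    omega
  have hub : ∀ z ∈ S, z ≤ (p : ℤ) * M := by
    rintro z ⟨r, hr, k, hk, rfl⟩
    have h1 := habs r hr
    have hk2 : k < Cr r := hk
    have h2 : k ≤ M - 1 := by
      have := le_abs_self (Cr r)
      omega
    have h3 : (p : ℤ) * k ≤ (p : ℤ) * (M - 1) := mul_le_mul_of_nonneg_left h2 hp'.le
    have h4 : (0 : ℤ) ≤ (r : ℤ) := by positivity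
    nlinarith
  have hlb : ∀ z : ℤ, z < -((p : ℤ) * M) - p → z ∈ S := by
    intro z hz
    have h0 := Int.emod_nonneg (-z - 1) (by omega : (p : ℤ) ≠ 0)
    have h1 := Int.emod_lt_of_pos (-z - 1) hp'
    set r : ℕ := ((-z - 1) % (p : ℤ)).toNat with hr
    have hrp : r < p := by omega
    have hrz : (r : ℤ) = (-z - 1) % (p : ℤ) := Int.toNat_of_nonneg h0
    set k : ℤ := -((-z - 1) / (p : ℤ)) with hk
    have e := Int.mul_ediv_add_emod (-z - 1) (p : ℤ)
    have hzk : z = (p : ℤ) * k - r - 1 := by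
      rw [hrz, hk]
      linarith
    refine ⟨r, hrp, k, ?_, hzk⟩
    have h2 : (p : ℤ) * k = z + r + 1 := by linarith [hzk]
    have h3 : (p : ℤ) * k < (p : ℤ) * (-M) := by
      have : (r : ℤ) < p := by omega
      nlinarith
    have h4 : k < -M := lt_of_mul_lt_mul_left h3 hp'.le
    have h5 := habs r hrp
    have h6 := neg_abs_le (Cr r)
    show k < Cr r
    omega
  set w₀ : ℤ := (p : ℤ) * (Cr ν - 1) - ν - 1 with hw₀def
  have hw₀ : w₀ ∈ S := ⟨ν, hν, Cr ν - 1, by show Cr ν - 1 < Cr ν; omega, rfl⟩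
  have hw₀0 : 0 ≤ w₀ := by
    have h1 : (1 : ℤ) ≤ Cr ν - 1 := by omega
    have h2 : (p : ℤ) * 1 ≤ (p : ℤ) * (Cr ν - 1) := mul_le_mul_of_nonneg_left h1 hp'.le
    have h3 : (ν : ℤ) < p := by exact_mod_cast hν
    simp only [hw₀def]
    linarith
  set z₀ : ℤ := (p : ℤ) * Cr μ - μ - 1 with hz₀def
  have hz₀ : z₀ ∉ S := by
    rintro ⟨r', hr', k', hk', heq⟩
    have h1 : (0 : ℤ) ≤ (μ : ℤ) := by positivity
    have h2 : (μ : ℤ) < p := by exact_mod_cast hμ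
    have h3 : (0 : ℤ) ≤ (r' : ℤ) := by positivity
    have h4 : (r' : ℤ) < p := by exact_mod_cast hr'
    obtain ⟨he1, he2⟩ := repr_unique hp' h1 h2 h3 h4 heq
    have h5 : μ = r' := by exact_mod_cast he1
    have hk2 : k' < Cr r' := hk'
    rw [← h5] at hk2
    omega
  have hz₀neg : z₀ < 0 := by
    have h3 : (p : ℤ) * Cr μ ≤ 0 := mul_nonpos_of_nonneg_of_nonpos hp'.le hcμ
    have h1 : (0 : ℤ) ≤ (μ : ℤ) := by positivity
    simp only [hz₀def]
    linarith
  set i₀ : ℕ := {w | w ∈ S ∧ w₀ < w}.ncard with hi₀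
  have hTbdd : BddAbove {z | z ∈ S ∧ {w | w ∈ S ∧ z < w}.ncard = i₀} :=
    ⟨(p : ℤ) * M, fun z hz => hub z hz.1⟩
  have hbead : w₀ ≤ bead S i₀ := le_csSup hTbdd ⟨hw₀, rfl⟩
  have hz₀H : z₀ ∈ {t | t ∉ S ∧ t < bead S i₀} := ⟨hz₀, by linarith⟩
  have hHfin : {t | t ∉ S ∧ t < bead S i₀}.Finite := by
    apply (Set.finite_Ico (-((p : ℤ) * M) - p) (bead S i₀)).subset
    rintro t ⟨ht1, ht2⟩
    refine ⟨?_, ht2⟩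
    by_contra hc
    push_neg at hc
    exact ht1 (hlb t hc)
  refine ⟨i₀, ?_⟩
  show partOf S i₀ ≠ 0
  have hpos : 0 < {t | t ∉ S ∧ t < bead S i₀}.ncard :=
    (Set.ncard_pos hHfin).2 ⟨z₀, hz₀H⟩
  show {t | t ∉ S ∧ t < bead S i₀}.ncard ≠ 0
  omega

end MMAux

namespace MMAux
open MM

theorem main (p : ℕ) (hp : 0 < p) (f : ℕ → ℕ) (hf : MM.IsPartition f)
    (hcore : ∀ i, MM.pcore f p i = 0) :
    (∑ᶠ c ∈ MM.cells f, ((-((-(MM.content c)).fdiv p)) - (MM.content c).fdiv p)) =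
      ((p : ℤ) - 1) * (MM.size f / p : ℕ) := by
  classical
  obtain ⟨hmono, N₀, hN₀⟩ := hf
  set N := max N₀ p with hNdef
  have hN : ∀ i, N ≤ i → f i = 0 := fun i hi => hN₀ i (le_trans (le_max_left _ _) hi)
  have hpN : p ≤ N := le_max_right _ _
  have hp' : (0 : ℤ) < (p : ℤ) := by exact_mod_cast hp
  have hz_anti : Antitone (fun _ : ℕ => (0 : ℕ)) := fun _ _ _ => le_rfl
  have hz_N : ∀ i, N ≤ i → (fun _ : ℕ => (0 : ℕ)) i = 0 := fun _ _ => rfl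
  have hchz : ∀ r, r < p → charge (col (maya (fun _ => 0)) p r) = 1 := by
    intro r hr
    rw [maya_zero, col_zero hp r hr, charge_Iic]
  have hA : ∀ r, r < p → (((Finset.range N).filter
      (fun i => (-(beta f i) - 1) % (p : ℤ) = r)).card : ℤ)
      = charge (col (maya f) p r) + ((N : ℤ) - r - 1) / p :=
    fun r hr => fiber_card hmono hN hp hpN r hr
  have hB : ∀ r, r < p → (((Finset.range N).filter
      (fun i => (-(beta (fun _ => 0) i) - 1) % (p : ℤ) = r)).card : ℤ)
      = 1 + ((N : ℤ) - r - 1) / p := by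
    intro r hr
    rw [fiber_card hz_anti hz_N hp hpN r hr, hchz r hr]
  have hNf := sum_fibers (g := f) (N := N) hp
  have hN0 := sum_fibers (g := fun _ => 0) (N := N) hp
  have hsumC : ∑ r ∈ Finset.range p, charge (col (maya f) p r) = (p : ℤ) := by
    have e1 : (N : ℤ) = ∑ r ∈ Finset.range p, (((Finset.range N).filter
        (fun i => (-(beta f i) - 1) % (p : ℤ) = r)).card : ℤ) := by exact_mod_cast hNf
    have e2 : (N : ℤ) = ∑ r ∈ Finset.range p, (((Finset.range N).filter
        (fun i => (-(beta (fun _ => 0) i) - 1) % (p : ℤ) = r)).card : ℤ) := by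
      exact_mod_cast hN0
    rw [Finset.sum_congr rfl (fun r hr => hA r (Finset.mem_range.1 hr))] at e1
    rw [Finset.sum_congr rfl (fun r hr => hB r (Finset.mem_range.1 hr))] at e2
    rw [Finset.sum_add_distrib] at e1
    rw [Finset.sum_add_distrib] at e2
    have e3 : ∑ _r ∈ Finset.range p, (1 : ℤ) = (p : ℤ) := by simp
    linarith
  have hC1 : ∀ r, r < p → charge (col (maya f) p r) = 1 := by
    by_contra hcon
    push_neg at hcon
    obtain ⟨r₀, hr₀, hr₀ne⟩ := hcon
    have hxμ : ∃ a, a < p ∧ charge (col (maya f) p a) ≤ 0 := by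
      by_contra hc
      push_neg at hc
      have hlt : ∑ _r ∈ Finset.range p, (1 : ℤ)
          < ∑ r ∈ Finset.range p, charge (col (maya f) p r) := by
        apply Finset.sum_lt_sum
        · intro i hi
          have := hc i (Finset.mem_range.1 hi)
          omega
        · refine ⟨r₀, Finset.mem_range.2 hr₀, ?_⟩
          have := hc r₀ hr₀
          omega
      have e3 : ∑ _r ∈ Finset.range p, (1 : ℤ) = (p : ℤ) := by simp
      linarith
    have hxν : ∃ b, b < p ∧ 2 ≤ charge (col (maya f) p b) := by
      obtain ⟨a, ha, ha0⟩ := hxμ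
      by_contra hc
      push_neg at hc
      have hlt : ∑ r ∈ Finset.range p, charge (col (maya f) p r)
          < ∑ _r ∈ Finset.range p, (1 : ℤ) := by
        apply Finset.sum_lt_sum
        · intro i hi
          have := hc i (Finset.mem_range.1 hi)
          omega
        · exact ⟨a, Finset.mem_range.2 ha, by omega⟩
      have e3 : ∑ _r ∈ Finset.range p, (1 : ℤ) = (p : ℤ) := by simp
      linarith
    obtain ⟨a, ha, ha0⟩ := hxμ
    obtain ⟨b, hb, hb2⟩ := hxν
    obtain ⟨i, hi⟩ := core_nontrivial hp ha hb ha0 hb2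
    exact hi (hcore i)
  have hfib : ∀ r ∈ Finset.range p,
      (((Finset.range N).filter (fun i => (-(beta f i) - 1) % (p : ℤ) = r)).card : ℤ)
      = (((Finset.range N).filter
          (fun i => (-(beta (fun _ => 0) i) - 1) % (p : ℤ) = r)).card : ℤ) := by
    intro r hr
    rw [Finset.mem_range] at hr
    rw [hA r hr, hB r hr, hC1 r hr]
  have hmod : ∑ i ∈ Finset.range N, (-(beta f i) - 1) % (p : ℤ)
      = ∑ i ∈ Finset.range N, (-(beta (fun _ => 0) i) - 1) % (p : ℤ) := by
    rw [sum_mod hp, sum_mod hp]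
    exact Finset.sum_congr rfl (fun r hr => by rw [hfib r hr])
  have hmod0 : ∀ i : ℕ, (-(beta (fun _ : ℕ => (0 : ℕ)) i) - 1) = (i : ℤ) := by
    intro i
    simp [beta]
  set D : ℕ → ℤ := fun i => ((f i : ℤ) - 1 - i) / (p : ℤ) - (-1 - (i : ℤ)) / (p : ℤ) with hD
  have hrow_id : ∀ i : ℕ,
      (f i : ℤ) = (p : ℤ) * D i + ((i : ℤ) % (p : ℤ) - (-(beta f i) - 1) % (p : ℤ)) := by
    intro i
    have hbeta : beta f i = (f i : ℤ) - i - 1 := rfl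
    have e1 := Int.mul_ediv_add_emod (-(beta f i) - 1) (p : ℤ)
    have e2 := Int.mul_ediv_add_emod (i : ℤ) (p : ℤ)
    have h2 : ((f i : ℤ) - 1 - (i : ℤ)) / (p : ℤ) = -((-(beta f i) - 1) / (p : ℤ)) - 1 := by
      have h := neg_ediv hp' (-(beta f i))
      rw [neg_neg] at h
      rw [show (f i : ℤ) - 1 - (i : ℤ) = beta f i from by rw [hbeta]; ring]
      exact h
    have h3 : (-1 - (i : ℤ)) / (p : ℤ) = -((i : ℤ) / (p : ℤ)) - 1 := by
      have h := neg_ediv hp' ((i : ℤ) + 1)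
      rw [show -((i : ℤ) + 1) = -1 - (i : ℤ) from by ring,
        show (i : ℤ) + 1 - 1 = (i : ℤ) from by ring] at h
      exact h
    simp only [hD]
    rw [h2, h3]
    linear_combination e1 - e2 - hbeta
  have hsum_f : ∑ i ∈ Finset.range N, (f i : ℤ)
      = (p : ℤ) * (∑ i ∈ Finset.range N, D i) := by
    have h1 : ∑ i ∈ Finset.range N, (f i : ℤ) = ∑ i ∈ Finset.range N,
        ((p : ℤ) * D i + ((i : ℤ) % (p : ℤ) - (-(beta f i) - 1) % (p : ℤ))) :=
      Finset.sum_congr rfl (fun i _ => hrow_id i)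
    have h2 : ∑ i ∈ Finset.range N, (i : ℤ) % (p : ℤ)
        = ∑ i ∈ Finset.range N, (-(beta f i) - 1) % (p : ℤ) := by
      rw [hmod]
      exact (Finset.sum_congr rfl (fun i _ => by rw [hmod0 i])).symm
    rw [h1, Finset.sum_add_distrib, Finset.sum_sub_distrib, ← Finset.mul_sum, h2,
      sub_self, add_zero]
  set T : Finset (ℕ × ℕ) := (Finset.range N).biUnion
      (fun i => (Finset.range (f i)).image (fun j => (i, j))) with hT
  have hmemT : ∀ c : ℕ × ℕ, c ∈ T ↔ c.2 < f c.1 := by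
    rintro ⟨i, j⟩
    simp only [hT, Finset.mem_biUnion, Finset.mem_image, Finset.mem_range, Prod.mk.injEq]
    constructor
    · rintro ⟨a, _, b, hb, rfl, rfl⟩
      exact hb
    · intro hj
      have hiN : i < N := by
        by_contra hc
        rw [hN i (by omega)] at hj
        omega
      exact ⟨i, hiN, j, hj, rfl, rfl⟩
  have hcells : MM.cells f = ↑T := by
    ext c
    rw [Finset.mem_coe, hmemT]
    rfl
  have hdisj : ∀ x ∈ Finset.range N, ∀ y ∈ Finset.range N, x ≠ y →
      Disjoint ((Finset.range (f x)).image (fun j => (x, j)))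
        ((Finset.range (f y)).image (fun j => (y, j))) := by
    intro x _ y _ hxy
    rw [Finset.disjoint_left]
    rintro c hcx hcy
    simp only [Finset.mem_image, Finset.mem_range] at hcx hcy
    obtain ⟨b, _, rfl⟩ := hcx
    obtain ⟨b', _, he⟩ := hcy
    exact hxy (congrArg Prod.fst he).symm
  have hinj : ∀ i : ℕ, ∀ x ∈ Finset.range (f i), ∀ y ∈ Finset.range (f i),
      (fun j => (i, j)) x = (fun j => (i, j)) y → x = y := by
    intro i x _ y _ h
    exact congrArg Prod.snd h
  have hsize : (MM.size f : ℤ) = ∑ i ∈ Finset.range N, (f i : ℤ) := by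
    have h1 : MM.size f = T.card := by rw [MM.size, hcells, Set.ncard_coe_finset]
    have h2 : T.card = ∑ i ∈ Finset.range N, f i := by
      rw [hT, Finset.card_biUnion hdisj]
      apply Finset.sum_congr rfl
      intro i _
      rw [Finset.card_image_of_injOn (fun x _ y _ h => congrArg Prod.snd h),
        Finset.card_range]
    rw [h1, h2]
    push_cast
    rfl
  have hLHS : (∑ᶠ c ∈ MM.cells f, ((-((-(MM.content c)).fdiv p)) - (MM.content c).fdiv p))
      = ∑ i ∈ Finset.range N, ((f i : ℤ) - D i) := by
    rw [hcells, finsum_mem_coe_finset, hT, Finset.sum_biUnion (fun x _ y _ hxy =>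
      hdisj x (by assumption) y (by assumption) hxy)]
    apply Finset.sum_congr rfl
    intro i _
    rw [Finset.sum_image (hinj i)]
    have hcontent : ∀ j : ℕ, MM.content (i, j) = (j : ℤ) - i := fun j => rfl
    calc ∑ j ∈ Finset.range (f i),
          ((-((-(MM.content (i, j))).fdiv p)) - (MM.content (i, j)).fdiv p)
        = ∑ j ∈ Finset.range (f i),
          ((-((-((j : ℤ) - i)).fdiv p)) - ((j : ℤ) - i).fdiv p) := by
          exact Finset.sum_congr rfl (fun j _ => by rw [hcontent j])
      _ = (f i : ℤ) - (((f i : ℤ) - 1 - i) / (p : ℤ) - (-1 - (i : ℤ)) / (p : ℤ)) :=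
          row_sum hp' i (f i)
      _ = (f i : ℤ) - D i := by simp only [hD]
  set Sd : ℤ := ∑ i ∈ Finset.range N, D i with hSd
  have hpd : (MM.size f : ℤ) = (p : ℤ) * Sd := by rw [hsize, hsum_f]
  have hd0 : 0 ≤ Sd := by
    by_contra hc
    push_neg at hc
    have h1 : (p : ℤ) * Sd < 0 := mul_neg_of_pos_of_neg hp' hc
    have h2 : (0 : ℤ) ≤ (MM.size f : ℤ) := by positivity
    linarith
  have htn : ((Sd.toNat : ℤ)) = Sd := Int.toNat_of_nonneg hd0
  have hdiv : (MM.size f) / p = Sd.toNat := by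
    have h1 : (MM.size f : ℤ) = ((p * Sd.toNat : ℕ) : ℤ) := by
      push_cast
      rw [htn]
      exact hpd
    have h2 : MM.size f = p * Sd.toNat := by exact_mod_cast h1
    rw [h2, Nat.mul_div_cancel_left _ hp]
  rw [hLHS, hdiv, Finset.sum_sub_distrib, hsum_f, htn]
  ring

end MMAux

/-- if λ has trivial p-core, ∑ (⌈c/p⌉ − ⌊c/p⌋) = (p−1)|λ|/p. -/
theorem content_ceil_sub_floor_sum (p : ℕ) (hp : 0 < p) (f : ℕ → ℕ) (hf : MM.IsPartition f)
    (hcore : ∀ i, MM.pcore f p i = 0) :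
    (∑ᶠ c ∈ MM.cells f, ((-((-(MM.content c)).fdiv p)) - (MM.content c).fdiv p)) =
      ((p : ℤ) - 1) * (MM.size f / p : ℕ) :=
  MMAux.main p hp f hf hcore
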